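/- Let (Ω, μ) be a finite measure space with μ(Ω) = N > 0, let E[X] = (1/N)∫X dμ, and let U ≥ 0 be a measurable function with E[U] = 1 and E[U²] < ∞. Let p* := μ(U>0)/N. Then var(U) := E[U²] − 1 ≥ 1/p* − 1, with equality if and only if U takes only the values 0 and 1/p* almost everywhere. -/

import Mathlib

open MeasureTheory Real Set

/-- Weak Zeroth Law of Natural Selection: for a relative fitness `U ≥ 0` of unit mean
on a finite measure space, `var(U) = E[U²] − 1 ≥ 1/p* − 1`, where
`p* = μ(U>0)/N` is the childbearing proportion, with equality iff
`U ∈ {0, 1/p*}` almost everywhere (selective equilibrium). -/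
theorem weak_zeroth_law
    {Ω : Type*} [MeasurableSpace Ω] (μ : Measure Ω) [IsFiniteMeasure μ]
    (hN : 0 < (μ univ).toReal)
    (U : Ω → ℝ) (hUm : Measurable U) (hU0 : ∀ x, 0 ≤ U x)
    (hU1 : (∫ x, U x ∂μ) / (μ univ).toReal = 1)
    (hU2 : Integrable (fun x => (U x) ^ 2) μ) :
    let N := (μ univ).toReal
    let pstar := (μ {x | 0 < U x}).toReal / N
    let v := (∫ x, (U x) ^ 2 ∂μ) / N - 1
    v ≥ 1 / pstar - 1 ∧
      (v = 1 / pstar - 1 ↔ ∀ᵐ x ∂μ, U x = 0 ∨ U x = 1 / pstar) := by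
  intro N pstar v
  set S : Set Ω := {x | 0 < U x} with hSdef
  have hSm : MeasurableSet S := measurableSet_lt measurable_const hUm
  have hUmem : MemLp U 2 μ :=
    (memLp_two_iff_integrable_sq hUm.aestronglyMeasurable).mpr hU2
  have hUint : Integrable U μ := hUmem.integrable (by norm_num)
  have hNne : N ≠ 0 := ne_of_gt hN
  have hIU : ∫ x, U x ∂μ = N := by
    field_simp at hU1; exact hU1
  have hcompl : ∀ x ∉ S, U x = 0 := by
    intro x hx
    have : ¬ 0 < U x := hx
    linarith [hU0 x]
  have hmne : μ S ≠ 0 := by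
    intro h
    have hU0' : U =ᵐ[μ] 0 := by
      refine (ae_iff).2 (measure_mono_null ?_ h)
      intro x hx
      simp only [Pi.zero_apply] at hx
      exact lt_of_le_of_ne (hU0 x) (Ne.symm hx)
    have : ∫ x, U x ∂μ = 0 := by
      rw [integral_congr_ae hU0']; simp
    rw [hIU] at this
    exact hNne this
  set m : ℝ := (μ S).toReal with hmdef
  have hm : 0 < m := ENNReal.toReal_pos hmne (measure_ne_top μ S)
  set c : ℝ := N / m with hcdef
  have hc : 0 < c := div_pos hN hm
  have hpc : 1 / pstar = c := by
    simp only [pstar, hcdef, one_div_div]; rfl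
  have hUS : ∫ x in S, U x ∂μ = N := by
    rw [setIntegral_eq_integral_of_forall_compl_eq_zero hcompl, hIU]
  have hU2S : ∫ x in S, (U x) ^ 2 ∂μ = ∫ x, (U x) ^ 2 ∂μ := by
    refine setIntegral_eq_integral_of_forall_compl_eq_zero ?_
    intro x hx
    rw [hcompl x hx]; ring
  have hsubmem : MemLp (fun x => U x - c) 2 μ := hUmem.sub (memLp_const c)
  have hsqint : Integrable (fun x => (U x - c) ^ 2) μ :=
    (memLp_two_iff_integrable_sq ((hUm.sub measurable_const).aestronglyMeasurable)).mp hsubmem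
  have hkey : ∫ x in S, (U x - c) ^ 2 ∂μ = ∫ x, (U x) ^ 2 ∂μ - N ^ 2 / m := by
    have heq : (fun x => (U x - c) ^ 2) = fun x => (U x) ^ 2 - (2 * c) * U x + c ^ 2 := by
      funext x; ring
    rw [heq, integral_add, integral_sub, integral_const_mul, setIntegral_const,
      hUS, hU2S]
    · simp only [smul_eq_mul, measureReal_def, ← hmdef]
      rw [hcdef]; field_simp; ring
    · exact hU2.restrict
    · exact (hUint.restrict.const_mul _)
    · exact (hU2.restrict).sub (hUint.restrict.const_mul _)
    · exact integrable_const _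
  have hnonneg : 0 ≤ ∫ x in S, (U x - c) ^ 2 ∂μ :=
    setIntegral_nonneg hSm fun x _ => sq_nonneg _
  have hineq : N ^ 2 / m ≤ ∫ x, (U x) ^ 2 ∂μ := by linarith [hkey ▸ hnonneg]
  constructor
  · rw [hpc]
    have : c ≤ (∫ x, (U x) ^ 2 ∂μ) / N := by
      rw [le_div_iff₀ hN]
      calc c * N = N ^ 2 / m := by rw [hcdef]; ring
        _ ≤ _ := hineq
    simp only [v]
    linarith
  · have hzero : (∫ x in S, (U x - c) ^ 2 ∂μ = 0) ↔
        (∀ᵐ x ∂μ, x ∈ S → U x = c) := by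
      rw [integral_eq_zero_iff_of_nonneg (fun x => sq_nonneg _) hsqint.restrict,
        Filter.EventuallyEq, ae_restrict_iff' hSm]
      constructor <;> intro h <;> filter_upwards [h] with x hx hxS
      · have h2 : (U x - c) ^ 2 = 0 := hx hxS
        have h3 := sq_eq_zero_iff.mp h2
        linarith
      · simp only [Pi.zero_apply, hx hxS, sub_self]
        ring
    have hveq : (v = 1 / pstar - 1) ↔ (∫ x in S, (U x - c) ^ 2 ∂μ = 0) := by
      rw [hpc, hkey]
      simp only [v]
      constructor <;> intro h
      · have : (∫ x, (U x) ^ 2 ∂μ) / N = c := by linarith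
        rw [hcdef] at this
        field_simp at this ⊢
        rw [this]; ring
      · have : ∫ x, (U x) ^ 2 ∂μ = N ^ 2 / m := by linarith
        rw [this, hcdef]
        field_simp
    rw [hveq, hzero, hpc]
    constructor <;> intro h <;> filter_upwards [h] with x hx
    · by_cases hxS : x ∈ S
      · exact Or.inr (hx hxS)
      · exact Or.inl (hcompl x hxS)
    · intro hxS
      rcases hx with h0 | hc'
      · exact absurd h0 (ne_of_gt hxS)
      · exact hc'
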